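/- Assume 1 ≤ q ≤ 4 and r ≥ 1, and let σ be a nonempty subset of N^r_q. The following are equivalent: (1) σ is a Scarf face of E_q^r; (2) for all a, b ∈ σ the set {a, b} is a Scarf face of E_q^r; (3) |a_i − b_i| ≤ 1 for all i ∈ [q] and all a, b ∈ σ; (4) σ ⊆ cU, where c ∈ ℕ^q is defined by c_i = min_{a∈σ} a_i (the exponent vector of the ε-gcd of σ). -/
import Mathlib


open Finset

/-- The exponent of the variable `x_A` in `lcm(ε^a : a ∈ σ)`:
`eLabel σ A = max_{a ∈ σ} ∑_{i ∈ A} a i` (and `0` if `σ = ∅`). -/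
def eLabel {q : ℕ} (σ : Finset (Fin q → ℕ)) (A : Finset (Fin q)) : ℕ :=
  σ.sup (fun a => ∑ i ∈ A, a i)

/-- `σ` is a face of the Scarf complex of `E_q^r`: a nonempty subset of
`N^r_q` such that every nonempty `τ ⊆ N^r_q` with the same label equals `σ`. -/
def IsScarf (q r : ℕ) (σ : Finset (Fin q → ℕ)) : Prop :=
  σ.Nonempty ∧ (∀ a ∈ σ, ∑ i, a i = r) ∧
    ∀ τ : Finset (Fin q → ℕ), τ.Nonempty → (∀ a ∈ τ, ∑ i, a i = r) →
      (∀ A : Finset (Fin q), A.Nonempty → eLabel τ A = eLabel σ A) → τ = σ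

/-- The set `aU = {c ∈ N^r_q : a i ≤ c i ≤ a i + 1 for all i}`, i.e. the
vertex set of the face `ε^a · U_q^{r-|a|}` of the Taylor complex of `E_q^r`. -/
def aUF (q r : ℕ) (a : Fin q → ℕ) : Finset (Fin q → ℕ) :=
  (Finset.Icc a (a + 1)).filter (fun c => ∑ i, c i = r)

-- pointwise ≤ with sum ≥ gives pointwise =
lemma eq_on_of_sum {q : ℕ} {s : Finset (Fin q)} {f g : Fin q → ℕ}
    (hle : ∀ i ∈ s, f i ≤ g i) (hsum : ∑ i ∈ s, g i ≤ ∑ i ∈ s, f i) :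
    ∀ i ∈ s, f i = g i := by
  intro i hi
  by_contra hne
  have hlt : f i < g i := lt_of_le_of_ne (hle i hi) hne
  have := Finset.sum_lt_sum hle ⟨i, hi, hlt⟩
  omega

lemma mem_of_box {q r : ℕ} (c : Fin q → ℕ) (ρ : Finset (Fin q → ℕ)) (hρ : ρ.Nonempty)
    (hρlb : ∀ b ∈ ρ, ∀ i, c i ≤ b i) (hρub : ∀ b ∈ ρ, ∀ i, b i ≤ c i + 1)
    (hρsum : ∀ b ∈ ρ, ∑ i, b i = r)
    (a : Fin q → ℕ) (halb : ∀ i, c i ≤ a i) (haub : ∀ i, a i ≤ c i + 1)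
    (hasum : ∑ i, a i = r)
    (hlab : ∀ A : Finset (Fin q), A.Nonempty → ∑ i ∈ A, a i ≤ eLabel ρ A) :
    a ∈ ρ := by
  set A : Finset (Fin q) := univ.filter (fun i => a i = c i + 1) with hA
  have haA : ∀ i ∈ A, a i = c i + 1 := by
    intro i hi; exact (Finset.mem_filter.1 hi).2
  have haA' : ∀ i ∉ A, a i = c i := by
    intro i hi
    have : ¬ (a i = c i + 1) := by
      intro h; exact hi (Finset.mem_filter.2 ⟨Finset.mem_univ i, h⟩)
    have h1 := halb i; have h2 := haub i; omega
  clear_value A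
  clear hA
  rcases A.eq_empty_or_nonempty with hAe | hAne
  · -- a = c pointwise
    have hac : ∀ i, a i = c i := by
      intro i; exact haA' i (by simp [hAe])
    obtain ⟨b, hb⟩ := hρ
    have hble : ∀ i ∈ univ, a i ≤ b i := by
      intro i _; rw [hac i]; exact hρlb b hb i
    have hsum : ∑ i, b i ≤ ∑ i, a i := by rw [hasum, hρsum b hb]
    have : ∀ i ∈ univ, a i = b i := eq_on_of_sum hble hsum
    have : a = b := funext fun i => this i (mem_univ i)
    rwa [this]
  · -- sup attained
    obtain ⟨b, hb, hbsup⟩ := Finset.exists_mem_eq_sup ρ hρ (fun x => ∑ i ∈ A, x i)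
    have h1 : ∑ i ∈ A, a i ≤ ∑ i ∈ A, b i := by
      have h := hlab A hAne
      simp only [eLabel] at h
      rw [hbsup] at h
      exact h
    -- on A, b ≤ c+1 = a
    have hbleA : ∀ i ∈ A, b i ≤ a i := by
      intro i hi; rw [haA i hi]; exact hρub b hb i
    have heqA : ∀ i ∈ A, b i = a i := eq_on_of_sum hbleA h1
    -- off A, a = c ≤ b ; sums equal overall
    have hsplit : ∀ f : Fin q → ℕ, ∑ i ∈ A, f i + ∑ i ∈ Aᶜ, f i = ∑ i, f i := by
      intro f
      exact Finset.sum_add_sum_compl A f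
    have h2 : ∑ i ∈ Aᶜ, b i ≤ ∑ i ∈ Aᶜ, a i := by
      have hA1 := hsplit a; have hA2 := hsplit b
      have hAeq : ∑ i ∈ A, a i = ∑ i ∈ A, b i := by
        apply Nat.le_antisymm h1
        apply Finset.sum_le_sum
        exact hbleA
      rw [hasum, hAeq] at hA1
      rw [hρsum b hb] at hA2
      exact le_of_eq (Nat.add_left_cancel (hA2.trans hA1.symm))
    have haleAc : ∀ i ∈ Aᶜ, a i ≤ b i := by
      intro i hi
      rw [haA' i (Finset.mem_compl.1 hi)]; exact hρlb b hb i
    have heqAc : ∀ i ∈ Aᶜ, a i = b i := eq_on_of_sum haleAc h2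
    have : a = b := by
      funext i
      by_cases hi : i ∈ A
      · exact (heqA i hi).symm
      · exact heqAc i (Finset.mem_compl.2 hi)
    rwa [this]

lemma box_scarf {q r : ℕ} (c : Fin q → ℕ)
    (σ : Finset (Fin q → ℕ)) (hσ : σ.Nonempty) (hσr : ∀ a ∈ σ, ∑ i, a i = r)
    (hcmin : ∀ i, ∃ a ∈ σ, a i = c i)
    (hclb : ∀ a ∈ σ, ∀ i, c i ≤ a i)
    (hbox : ∀ a ∈ σ, ∀ i, a i ≤ c i + 1) :
    IsScarf q r σ := by
  refine ⟨hσ, hσr, ?_⟩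
  intro τ hτ hτr hlab
  -- upper bounds for τ
  have hτub : ∀ a ∈ τ, ∀ i, a i ≤ c i + 1 := by
    intro a ha i
    have h1 : a i ≤ eLabel τ {i} := by
      have := Finset.le_sup (f := fun x => ∑ k ∈ ({i} : Finset (Fin q)), x k) ha
      simpa [eLabel] using this
    have h2 : eLabel σ {i} ≤ c i + 1 := by
      apply Finset.sup_le
      intro b hb
      simpa using hbox b hb i
    rw [hlab {i} (Finset.singleton_nonempty i)] at h1
    exact le_trans h1 h2
  -- lower bounds for τ
  have hτlb : ∀ a ∈ τ, ∀ i, c i ≤ a i := by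
    intro a ha i
    obtain ⟨a0, ha0, ha0i⟩ := hcmin i
    have hcr : c i ≤ r :=
      calc c i = a0 i := ha0i.symm
        _ ≤ ∑ k, a0 k := Finset.single_le_sum (f := fun k => a0 k)
              (fun k _ => Nat.zero_le _) (mem_univ i)
        _ = r := hσr a0 ha0
    rcases (({i} : Finset (Fin q))ᶜ).eq_empty_or_nonempty with hAe | hAne
    · -- q = 1 case : univ = {i}
      have huniv : (univ : Finset (Fin q)) = {i} := by
        exact ((Finset.compl_eq_empty_iff _).1 hAe).symm
      have h1 : ∑ k, a k = a i := by rw [huniv, Finset.sum_singleton]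
      have h2 : ∑ k, a0 k = a0 i := by rw [huniv, Finset.sum_singleton]
      rw [hτr a ha] at h1
      rw [hσr a0 ha0] at h2
      omega
    · have hsplitg : ∀ f : Fin q → ℕ, ∑ k ∈ ({i} : Finset (Fin q))ᶜ, f k + f i = ∑ k, f k := by
        intro f
        have := Finset.sum_add_sum_compl ({i} : Finset (Fin q)) f
        rw [Finset.sum_singleton] at this
        omega
      set A := (({i} : Finset (Fin q))ᶜ) with hAdef
      -- eLabel σ A = r - c i
      have hub : eLabel σ A ≤ r - c i := by
        apply Finset.sup_le
        intro b hb
        have h1 := hsplitg b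
        rw [hσr b hb] at h1
        have h2 := hclb b hb i
        omega
      have hlb : r - c i ≤ eLabel σ A := by
        have h1 := hsplitg a0
        rw [hσr a0 ha0] at h1
        have h2 : ∑ k ∈ A, a0 k ≤ eLabel σ A := Finset.le_sup ha0
        omega
      have h3 : ∑ k ∈ A, a k ≤ eLabel τ A := Finset.le_sup ha
      rw [hlab A hAne] at h3
      have h4 := hsplitg a
      rw [hτr a ha] at h4
      omega
  -- now apply mem_of_box both ways
  apply Finset.Subset.antisymm
  · intro a ha
    exact mem_of_box c σ hσ hclb hbox hσr a (hτlb a ha) (hτub a ha) (hτr a ha)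
      (fun A hA => by
        rw [← hlab A hA]
        exact Finset.le_sup ha)
  · intro a ha
    exact mem_of_box c τ hτ hτlb hτub hτr a (hclb a ha) (hbox a ha) (hσr a ha)
      (fun A hA => by
        rw [hlab A hA]
        exact Finset.le_sup ha)

lemma eLabel_union {q : ℕ} (s t : Finset (Fin q → ℕ)) (A : Finset (Fin q)) :
    eLabel (s ∪ t) A = eLabel s A ⊔ eLabel t A := Finset.sup_union

lemma scarf_subset {q r : ℕ} {σ π : Finset (Fin q → ℕ)} (h : IsScarf q r σ)
    (hπσ : π ⊆ σ) (hπ : π.Nonempty) : IsScarf q r π := by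
  obtain ⟨hσne, hσr, huniq⟩ := h
  refine ⟨hπ, fun a ha => hσr a (hπσ ha), ?_⟩
  intro τ hτ hτr hlab
  have hσd : (σ \ π) ∪ π = σ := Finset.sdiff_union_of_subset hπσ
  have hρ : (σ \ π) ∪ τ = σ := by
    apply huniq
    · exact hτ.mono Finset.subset_union_right
    · intro a haa
      rcases Finset.mem_union.1 haa with h | h
      · exact hσr a (Finset.sdiff_subset h)
      · exact hτr a h
    · intro A hA
      rw [eLabel_union, hlab A hA, ← eLabel_union, hσd]
  have hτσ : τ ⊆ σ := hρ ▸ Finset.subset_union_right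
  have hπτ : π ⊆ τ := by
    intro x hx
    have hxσ : x ∈ σ := hπσ hx
    rw [← hρ] at hxσ
    rcases Finset.mem_union.1 hxσ with h | h
    · exact absurd hx (Finset.mem_sdiff.1 h).2
    · exact h
  have hσd2 : (σ \ τ) ∪ τ = σ := Finset.sdiff_union_of_subset hτσ
  have hρ2 : (σ \ τ) ∪ π = σ := by
    apply huniq
    · exact hπ.mono Finset.subset_union_right
    · intro a haa
      rcases Finset.mem_union.1 haa with h | h
      · exact hσr a (Finset.sdiff_subset h)
      · exact hσr a (hπσ h)
    · intro A hA
      rw [eLabel_union, ← hlab A hA, ← eLabel_union, hσd2]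
  have hτπ : τ ⊆ π := by
    intro x hx
    have hxσ : x ∈ σ := hτσ hx
    rw [← hρ2] at hxσ
    rcases Finset.mem_union.1 hxσ with h | h
    · exact absurd hx (Finset.mem_sdiff.1 h).2
    · exact h
  exact Finset.Subset.antisymm hτπ hπτ

lemma eLabel_pair {q : ℕ} (a b : Fin q → ℕ) (A : Finset (Fin q)) :
    eLabel {a, b} A = (∑ i ∈ A, a i) ⊔ (∑ i ∈ A, b i) := by
  simp [eLabel, Finset.sup_insert, Finset.sup_singleton]

lemma pair_not_scarf_aux {q r : ℕ} (a b : Fin q → ℕ)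
    (ha : ∑ i, a i = r) (hb : ∑ i, b i = r) (v w : Fin q → ℤ)
    (hveq : ∀ k, v k = (a k : ℤ) - b k)
    (hw0 : ∑ k, w k = 0)
    (hwne : ∃ k, w k ≠ 0)
    (hwnv : ∃ k, w k ≠ v k)
    (hwneg : ∀ k, w k < 0 → v k ≤ w k)
    (hkey : ∀ A : Finset (Fin q), ∑ k ∈ A, w k ≤ max 0 (∑ k ∈ A, v k)) :
    ¬ IsScarf q r {a, b} := by
  rintro ⟨-, -, huniq⟩
  have hpos : ∀ k, 0 ≤ (b k : ℤ) + w k := by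
    intro k
    rcases le_or_gt 0 (w k) with h | h
    · exact add_nonneg (Int.natCast_nonneg _) h
    · have h1 := hwneg k h
      rw [hveq k] at h1
      have h2 : (0:ℤ) ≤ (a k : ℤ) := Int.natCast_nonneg _
      linarith
  set d : Fin q → ℕ := fun k => ((b k : ℤ) + w k).toNat with hd
  have hdZ : ∀ k, (d k : ℤ) = (b k : ℤ) + w k := fun k => Int.toNat_of_nonneg (hpos k)
  have hdsumA : ∀ A : Finset (Fin q), (∑ k ∈ A, (d k : ℤ))
      = (∑ k ∈ A, (b k : ℤ)) + ∑ k ∈ A, w k := by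
    intro A
    rw [← Finset.sum_add_distrib]
    exact Finset.sum_congr rfl (fun k _ => hdZ k)
  have hbcast : ∀ A : Finset (Fin q), (∑ k ∈ A, (b k : ℤ)) = ((∑ k ∈ A, b k : ℕ) : ℤ) := by
    intro A; push_cast; ring
  have hdsum : ∑ k, d k = r := by
    have h1 : ((∑ k, d k : ℕ) : ℤ) = ((r : ℕ) : ℤ) := by
      push_cast
      rw [hdsumA univ, hw0, hbcast univ, hb]
      push_cast; ring
    exact_mod_cast h1
  have hdna : d ≠ a := by
    obtain ⟨k0, hk0⟩ := hwnv
    intro h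
    apply hk0
    have h1 := congrFun h k0
    have h2 : (d k0 : ℤ) = (a k0 : ℤ) := by rw [h1]
    rw [hdZ k0] at h2
    rw [hveq k0]
    linarith
  have hdnb : d ≠ b := by
    obtain ⟨k0, hk0⟩ := hwne
    intro h
    apply hk0
    have h1 := congrFun h k0
    have h2 : (d k0 : ℤ) = (b k0 : ℤ) := by rw [h1]
    rw [hdZ k0] at h2
    linarith
  have hdnotin : d ∉ ({a, b} : Finset (Fin q → ℕ)) := by
    intro h
    rcases Finset.mem_insert.1 h with h | h
    · exact hdna h
    · exact hdnb (Finset.mem_singleton.1 h)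
  have hkey' : ∀ A : Finset (Fin q), ∑ k ∈ A, d k ≤ (∑ k ∈ A, a k) ⊔ (∑ k ∈ A, b k) := by
    intro A
    have h1 : ((∑ k ∈ A, d k : ℕ) : ℤ) ≤ (((∑ k ∈ A, a k) ⊔ (∑ k ∈ A, b k) : ℕ) : ℤ) := by
      push_cast
      have h2 : (∑ k ∈ A, (a k:ℤ)) = (∑ k ∈ A, (b k:ℤ)) + ∑ k ∈ A, v k := by
        rw [← Finset.sum_add_distrib]
        exact Finset.sum_congr rfl (fun k _ => by rw [hveq k]; ring)
      have h3 := hkey A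
      have h4 := hdsumA A
      rw [h4, h2]
      rcases le_max_iff.1 h3 with h5 | h5
      · exact le_max_of_le_right (by linarith)
      · exact le_max_of_le_left (by linarith)
    exact_mod_cast h1
  have hτeq := huniq (insert d {a, b}) (Finset.insert_nonempty _ _)
    (by
      intro x hx
      rcases Finset.mem_insert.1 hx with h | h
      · rw [h]; exact hdsum
      · rcases Finset.mem_insert.1 h with h | h
        · rw [h]; exact ha
        · rw [Finset.mem_singleton.1 h]; exact hb)
    (by
      intro A hA
      have h5 := hkey' A
      rw [← eLabel_pair a b A] at h5
      rw [eLabel, Finset.sup_insert, ← eLabel]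
      exact sup_eq_right.2 h5)
  rw [← hτeq] at hdnotin
  exact hdnotin (Finset.mem_insert_self d {a, b})

-- sum of a two-point ±1 function
lemma sum_two_point {q : ℕ} (i j : Fin q) (hij : i ≠ j) (A : Finset (Fin q)) :
    (∑ k ∈ A, (if k = i then (1:ℤ) else if k = j then -1 else 0))
      = (if i ∈ A then (1:ℤ) else 0) + (if j ∈ A then -1 else 0) := by
  have hpt : ∀ k, (if k = i then (1:ℤ) else if k = j then -1 else 0)
      = (if k = i then (1:ℤ) else 0) + (if k = j then -1 else 0) := by
    intro k
    by_cases h1 : k = i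
    · subst h1
      simp [hij]
    · simp [h1]
  rw [Finset.sum_congr rfl (fun k _ => hpt k), Finset.sum_add_distrib,
    Finset.sum_ite_eq' A i (fun _ => (1:ℤ)), Finset.sum_ite_eq' A j (fun _ => (-1:ℤ))]

lemma pair_far {q r : ℕ} (hq4 : q ≤ 4) (a b : Fin q → ℕ)
    (ha : ∑ i, a i = r) (hb : ∑ i, b i = r) (i : Fin q) (hi : b i + 2 ≤ a i) :
    ¬ IsScarf q r {a, b} := by
  classical
  set v : Fin q → ℤ := fun k => (a k : ℤ) - b k with hv
  have hveq : ∀ k, v k = (a k : ℤ) - b k := fun k => rfl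
  have hvi : (2:ℤ) ≤ v i := by
    rw [hveq]
    have : ((b i + 2 : ℕ) : ℤ) ≤ ((a i : ℕ) : ℤ) := by exact_mod_cast hi
    push_cast at this
    linarith
  have hvsum0 : ∑ k, v k = 0 := by
    have h1 : ∑ k, v k = (∑ k, (a k : ℤ)) - ∑ k, (b k : ℤ) := by
      rw [← Finset.sum_sub_distrib]
    have h2 : (∑ k, (a k : ℤ)) = ((r : ℕ) : ℤ) := by
      rw [← ha]; push_cast; ring
    have h3 : (∑ k, (b k : ℤ)) = ((r : ℕ) : ℤ) := by
      rw [← hb]; push_cast; ring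
    rw [h1, h2, h3]; ring
  set P : Finset (Fin q) := univ.filter (fun k => 0 < v k) with hP
  set M : Finset (Fin q) := univ.filter (fun k => v k < 0) with hM
  have hmemP : ∀ k, k ∈ P ↔ 0 < v k := by
    intro k; rw [hP]; simp
  have hmemM : ∀ k, k ∈ M ↔ v k < 0 := by
    intro k; rw [hM]; simp
  have hiP : i ∈ P := (hmemP i).2 (by linarith)
  have hMne : M.Nonempty := by
    by_contra h
    rw [Finset.not_nonempty_iff_eq_empty] at h
    have hnn : ∀ k ∈ univ, (0:ℤ) ≤ v k := by
      intro k _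
      by_contra hk
      have : k ∈ M := (hmemM k).2 (by linarith)
      rw [h] at this
      exact absurd this (Finset.notMem_empty k)
    have := Finset.single_le_sum hnn (mem_univ i)
    rw [hvsum0] at this
    linarith
  -- main case analysis
  by_cases hM1 : M.card = 1
  · -- Case A : M = {j}
    obtain ⟨j, hj⟩ := Finset.card_eq_one.1 hM1
    have hjM : j ∈ M := by rw [hj]; exact Finset.mem_singleton_self j
    have hvj : v j < 0 := (hmemM j).1 hjM
    have hij : i ≠ j := by
      intro h; rw [h] at hvi; linarith
    set w : Fin q → ℤ := fun k => if k = i then (1:ℤ) else if k = j then -1 else 0 with hw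
    refine pair_not_scarf_aux a b ha hb v w hveq ?_ ?_ ?_ ?_ ?_
    · rw [hw, sum_two_point i j hij univ]
      simp
    · exact ⟨i, by rw [hw]; simp⟩
    · exact ⟨i, by rw [hw]; simp; intro h; rw [← h] at hvi; norm_num at hvi⟩
    · intro k hk
      rw [hw] at hk
      by_cases h1 : k = i
      · rw [h1] at hk; simp at hk
      · by_cases h2 : k = j
        · subst h2
          rw [hw]; simp [h1]
          linarith
        · simp [h1, h2] at hk
    · intro A
      rw [hw, sum_two_point i j hij A]
      by_cases hiA : i ∈ A
      · by_cases hjA : j ∈ A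
        · simp [hiA, hjA]
        · -- key case
          simp only [hiA, hjA, if_true, if_false, if_neg hjA]
          have hnn : ∀ k ∈ A, (0:ℤ) ≤ v k := by
            intro k hk
            by_contra hvk
            have : k ∈ M := (hmemM k).2 (by linarith)
            rw [hj] at this
            have : k = j := Finset.mem_singleton.1 this
            exact hjA (this ▸ hk)
          have h1 := Finset.single_le_sum hnn hiA
          have : (1:ℤ) + -0 ≤ ∑ k ∈ A, v k := by linarith
          refine le_max_of_le_right (by linarith)
      · by_cases hjA : j ∈ A <;> simp [hiA, hjA]
  · by_cases hP1 : P.card = 1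
    · -- Case B : P = {i}
      have hPi : P = {i} := by
        obtain ⟨i', hi'⟩ := Finset.card_eq_one.1 hP1
        rw [hi'] at hiP ⊢
        rw [Finset.mem_singleton.1 hiP]
      obtain ⟨j, hjM⟩ := hMne
      have hvj : v j < 0 := (hmemM j).1 hjM
      have hij : i ≠ j := by
        intro h; rw [h] at hvi; linarith
      set w : Fin q → ℤ := fun k => if k = i then (1:ℤ) else if k = j then -1 else 0 with hw
      refine pair_not_scarf_aux a b ha hb v w hveq ?_ ?_ ?_ ?_ ?_
      · rw [hw, sum_two_point i j hij univ]
        simp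
      · exact ⟨i, by rw [hw]; simp⟩
      · exact ⟨i, by rw [hw]; simp; intro h; rw [← h] at hvi; norm_num at hvi⟩
      · intro k hk
        rw [hw] at hk
        by_cases h1 : k = i
        · rw [h1] at hk; simp at hk
        · by_cases h2 : k = j
          · subst h2
            rw [hw]; simp [h1]
            linarith
          · simp [h1, h2] at hk
      · intro A
        rw [hw, sum_two_point i j hij A]
        by_cases hiA : i ∈ A
        · by_cases hjA : j ∈ A
          · simp [hiA, hjA]
          · -- key case : 1 ≤ ∑_A v
            simp only [hiA, hjA, if_true, if_false, if_neg hjA]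
            have hnonpos : ∀ k, k ≠ i → v k ≤ 0 := by
              intro k hk
              by_contra hvk
              have : k ∈ P := (hmemP k).2 (by linarith)
              rw [hPi] at this
              exact hk (Finset.mem_singleton.1 this)
            -- ∑_A v = v i + ∑_{A.erase i} v ≥ v i + ∑_{(univ.erase i).erase j} v = -v j ≥ 1
            have hsplitA : v i + ∑ k ∈ A.erase i, v k = ∑ k ∈ A, v k :=
              Finset.add_sum_erase A v hiA
            have hBC : A.erase i ⊆ ((univ.erase i).erase j : Finset (Fin q)) := by
              intro k hk
              rcases Finset.mem_erase.1 hk with ⟨hk1, hk2⟩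
              refine Finset.mem_erase.2 ⟨?_, Finset.mem_erase.2 ⟨hk1, mem_univ k⟩⟩
              intro h; rw [h] at hk2; exact hjA hk2
            have hCB : ∑ k ∈ ((univ.erase i).erase j : Finset (Fin q)), v k
                ≤ ∑ k ∈ A.erase i, v k := by
              have hsd := Finset.sum_sdiff hBC (f := v)
              have hnp : ∑ k ∈ (((univ.erase i).erase j : Finset (Fin q)) \ A.erase i), v k ≤ 0 := by
                apply Finset.sum_nonpos
                intro k hk
                have hk' := Finset.mem_sdiff.1 hk
                have : k ≠ i := (Finset.mem_erase.1 (Finset.mem_erase.1 hk'.1).2).1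
                exact hnonpos k this
              linarith
            have hCval : ∑ k ∈ ((univ.erase i).erase j : Finset (Fin q)), v k = -(v i) - v j := by
              have h1 : v i + ∑ k ∈ univ.erase i, v k = ∑ k, v k :=
                Finset.add_sum_erase univ v (mem_univ i)
              have hjmem : j ∈ (univ.erase i : Finset (Fin q)) :=
                Finset.mem_erase.2 ⟨fun h => hij h.symm, mem_univ j⟩
              have h2 : v j + ∑ k ∈ (univ.erase i).erase j, v k = ∑ k ∈ univ.erase i, v k :=
                Finset.add_sum_erase _ v hjmem
              rw [hvsum0] at h1
              linarith
            refine le_max_of_le_right ?_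
            have : (1:ℤ) ≤ -(v j) := by linarith
            linarith
        · by_cases hjA : j ∈ A <;> simp [hiA, hjA]
    · -- Case C : P.card = 2 and M.card = 2
      have hPM : Disjoint P M := by
        rw [Finset.disjoint_left]
        intro k hkP hkM
        have h1 := (hmemP k).1 hkP
        have h2 := (hmemM k).1 hkM
        linarith
      have hcards : P.card + M.card ≤ q := by
        rw [← Finset.card_union_of_disjoint hPM]
        exact le_trans (Finset.card_le_card (Finset.subset_univ _)) (by simp)
      have hPc : P.card = 2 ∧ M.card = 2 := by
        have h1 : 1 ≤ P.card := Finset.card_pos.2 ⟨i, hiP⟩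
        have h2 : 1 ≤ M.card := Finset.card_pos.2 hMne
        omega
      set w : Fin q → ℤ := fun k => (if k ∈ P then (1:ℤ) else 0) + (if k ∈ M then -1 else 0)
        with hw
      have hsumw : ∀ A : Finset (Fin q),
          ∑ k ∈ A, w k = ((A ∩ P).card : ℤ) - ((A ∩ M).card : ℤ) := by
        intro A
        rw [hw]
        rw [Finset.sum_add_distrib]
        rw [Finset.sum_ite_mem A P (fun _ => (1:ℤ)), Finset.sum_ite_mem A M (fun _ => (-1:ℤ))]
        simp
        ring
      refine pair_not_scarf_aux a b ha hb v w hveq ?_ ?_ ?_ ?_ ?_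
      · rw [hsumw univ, Finset.univ_inter, Finset.univ_inter, hPc.1, hPc.2]
        ring
      · refine ⟨i, ?_⟩
        rw [hw]
        have hiM : i ∉ M := by
          intro h; have := (hmemM i).1 h; linarith
        simp [hiP, hiM]
      · refine ⟨i, ?_⟩
        rw [hw]
        have hiM : i ∉ M := by
          intro h; have := (hmemM i).1 h; linarith
        simp [hiP, hiM]
        intro h; rw [← h] at hvi; norm_num at hvi
      · intro k hk
        rw [hw] at hk ⊢
        by_cases h1 : k ∈ P
        · have h2 : k ∉ M := Finset.disjoint_left.1 hPM h1
          simp [h1, h2] at hk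
        · by_cases h2 : k ∈ M
          · simp [h1, h2]
            have := (hmemM k).1 h2
            linarith
          · simp [h1, h2] at hk
      · intro A
        rw [hsumw A]
        rcases le_or_gt (((A ∩ P).card : ℤ) - ((A ∩ M).card : ℤ)) 0 with hle | hgt
        · exact le_max_of_le_left hle
        · refine le_max_of_le_right ?_
          -- card (A∩P) ≥ card (A∩M) + 1
          have hAP2 : (A ∩ P).card ≤ 2 := by
            rw [← hPc.1]; exact Finset.card_le_card (Finset.inter_subset_right)
          have hAMcases : (A ∩ M).card = 0 ∨ ((A ∩ M).card = 1 ∧ (A ∩ P).card = 2) := by omega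
          have hvzero : ∀ k, k ∉ P → k ∉ M → v k = 0 := by
            intro k h1 h2
            have := (hmemP k).not.1 h1
            have h3 : ¬ 0 < v k := fun h => h1 ((hmemP k).2 h)
            have h4 : ¬ v k < 0 := fun h => h2 ((hmemM k).2 h)
            linarith
          -- split ∑_A v
          have hsplitv : ∀ B : Finset (Fin q), ∑ k ∈ B, v k
              = ∑ k ∈ B ∩ P, v k + ∑ k ∈ B ∩ M, v k := by
            intro B
            have hpt : ∀ k, v k = (if k ∈ P then v k else 0) + (if k ∈ M then v k else 0) := by
              intro k
              by_cases h1 : k ∈ P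
              · have h2 : k ∉ M := Finset.disjoint_left.1 hPM h1
                simp [h1, h2]
              · by_cases h2 : k ∈ M
                · simp [h1, h2]
                · simp [h1, h2, hvzero k h1 h2]
            rw [Finset.sum_congr rfl (fun k _ => hpt k), Finset.sum_add_distrib,
              Finset.sum_ite_mem B P v, Finset.sum_ite_mem B M v]
          rcases hAMcases with h0 | ⟨h1, h2⟩
          · -- A∩M empty : pointwise v ≥ w on A
            have hAM : A ∩ M = ∅ := Finset.card_eq_zero.1 h0
            rw [hsplitv A, hAM, Finset.sum_empty, add_zero]
            have : ((A ∩ P).card : ℤ) ≤ ∑ k ∈ A ∩ P, v k := by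
              have : ∀ k ∈ A ∩ P, (1:ℤ) ≤ v k := by
                intro k hk
                have := (hmemP k).1 (Finset.mem_inter.1 hk).2
                linarith
              calc ((A ∩ P).card : ℤ) = ∑ _k ∈ A ∩ P, (1:ℤ) := by simp
                _ ≤ ∑ k ∈ A ∩ P, v k := Finset.sum_le_sum this
            rw [h0] at *
            push_cast
            linarith
          · -- A∩M = {j}, A∩P = P
            have hAPP : A ∩ P = P :=
              Finset.eq_of_subset_of_card_le Finset.inter_subset_right (by omega)
            obtain ⟨j, hj⟩ := Finset.card_eq_one.1 h1
            have hjM : j ∈ M := by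
              have : j ∈ A ∩ M := by rw [hj]; exact Finset.mem_singleton_self j
              exact (Finset.mem_inter.1 this).2
            -- M = {j, j'}
            have hMe : (M.erase j).card = 1 := by
              rw [Finset.card_erase_of_mem hjM, hPc.2]
            obtain ⟨j', hj'⟩ := Finset.card_eq_one.1 hMe
            have hj'M : j' ∈ M := by
              have : j' ∈ M.erase j := by rw [hj']; exact Finset.mem_singleton_self j'
              exact Finset.mem_of_mem_erase this
            have hjj' : j' ≠ j := by
              have : j' ∈ M.erase j := by rw [hj']; exact Finset.mem_singleton_self j'
              exact (Finset.mem_erase.1 this).1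
            have hvj' : v j' < 0 := (hmemM j').1 hj'M
            have hsumM : ∑ k ∈ M, v k = v j + v j' := by
              have h3 : v j + ∑ k ∈ M.erase j, v k = ∑ k ∈ M, v k :=
                Finset.add_sum_erase M v hjM
              rw [hj', Finset.sum_singleton] at h3
              linarith
            have hsumPM : ∑ k ∈ P, v k + ∑ k ∈ M, v k = 0 := by
              have := hsplitv univ
              rw [Finset.univ_inter, Finset.univ_inter] at this
              rw [← this, hvsum0]
            rw [hsplitv A, hAPP, hj, Finset.sum_singleton, hPc.1, Finset.card_singleton]
            push_cast
            linarith

/-- Proposition (p:U=Scarf): for `1 ≤ q ≤ 4` and a nonempty `σ ⊆ N^r_q`, the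
following are equivalent: (1) `σ` is a Scarf face of `E_q^r`; (2) all pairs
`{a, b}` with `a, b ∈ σ` are Scarf faces; (3) `|a i - b i| ≤ 1` for all
`a, b ∈ σ` and all `i`; (4) `σ ⊆ cU` where `c i = min_{a ∈ σ} a i`. -/
theorem stmt14 (q r : ℕ) (hq1 : 1 ≤ q) (hq4 : q ≤ 4) (hr : 1 ≤ r)
    (σ : Finset (Fin q → ℕ)) (hσ : σ.Nonempty) (hσr : ∀ a ∈ σ, ∑ i, a i = r) :
    (IsScarf q r σ ↔ ∀ a ∈ σ, ∀ b ∈ σ, IsScarf q r {a, b}) ∧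
    (IsScarf q r σ ↔ ∀ a ∈ σ, ∀ b ∈ σ, ∀ i, a i ≤ b i + 1 ∧ b i ≤ a i + 1) ∧
    (IsScarf q r σ ↔ σ ⊆ aUF q r (fun i => σ.inf' hσ (fun a => a i))) := by


  classical
  set c : Fin q → ℕ := fun i => σ.inf' hσ (fun a => a i) with hc
  have hclb : ∀ a ∈ σ, ∀ i, c i ≤ a i := fun a ha i => Finset.inf'_le _ ha
  have hcmin : ∀ i, ∃ a ∈ σ, a i = c i := by
    intro i
    obtain ⟨a, ha, hai⟩ := Finset.exists_mem_eq_inf' hσ (fun a => a i)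
    exact ⟨a, ha, hai.symm⟩
  clear_value c
  have h3to1 : (∀ a ∈ σ, ∀ b ∈ σ, ∀ i, a i ≤ b i + 1 ∧ b i ≤ a i + 1) → IsScarf q r σ := by
    intro hpc
    apply box_scarf c σ hσ hσr hcmin hclb
    intro a ha i
    obtain ⟨b, hb, hbi⟩ := hcmin i
    have := (hpc a ha b hb i).1
    omega
  have h1to2 : IsScarf q r σ → ∀ a ∈ σ, ∀ b ∈ σ, IsScarf q r {a, b} := by
    intro hsc a ha b hb
    exact scarf_subset hsc
      (Finset.insert_subset ha (Finset.singleton_subset_iff.2 hb))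
      (Finset.insert_nonempty _ _)
  have h2to3 : (∀ a ∈ σ, ∀ b ∈ σ, IsScarf q r {a, b}) →
      (∀ a ∈ σ, ∀ b ∈ σ, ∀ i, a i ≤ b i + 1 ∧ b i ≤ a i + 1) := by
    intro hp a ha b hb i
    have hpair := hp a ha b hb
    constructor
    · by_contra h
      push_neg at h
      exact pair_far hq4 a b (hσr a ha) (hσr b hb) i (by omega) hpair
    · by_contra h
      push_neg at h
      have hfar := pair_far hq4 b a (hσr b hb) (hσr a ha) i (by omega)
      rw [Finset.pair_comm b a] at hfar
      exact hfar hpair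
  have h3to2 : (∀ a ∈ σ, ∀ b ∈ σ, ∀ i, a i ≤ b i + 1 ∧ b i ≤ a i + 1) →
      ∀ a ∈ σ, ∀ b ∈ σ, IsScarf q r {a, b} := by
    intro hpc a ha b hb
    have hsums : ∀ x ∈ ({a, b} : Finset (Fin q → ℕ)), ∑ i, x i = r := by
      intro x hx
      rcases Finset.mem_insert.1 hx with h | h
      · rw [h]; exact hσr a ha
      · rw [Finset.mem_singleton.1 h]; exact hσr b hb
    apply box_scarf (fun i => min (a i) (b i)) {a, b} (Finset.insert_nonempty _ _) hsums
    · intro i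
      rcases le_total (a i) (b i) with h | h
      · exact ⟨a, Finset.mem_insert_self _ _, (min_eq_left h).symm⟩
      · exact ⟨b, Finset.mem_insert.2 (Or.inr (Finset.mem_singleton_self b)),
          (min_eq_right h).symm⟩
    · intro x hx i
      rcases Finset.mem_insert.1 hx with h | h
      · rw [h]; exact min_le_left _ _
      · rw [Finset.mem_singleton.1 h]; exact min_le_right _ _
    · intro x hx i
      have h1 := (hpc a ha b hb i).1
      have h2 := (hpc a ha b hb i).2
      rcases Finset.mem_insert.1 hx with h | h
      · rw [h]; omega
      · rw [Finset.mem_singleton.1 h]; omega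
  have h3to4 : (∀ a ∈ σ, ∀ b ∈ σ, ∀ i, a i ≤ b i + 1 ∧ b i ≤ a i + 1) →
      σ ⊆ aUF q r c := by
    intro hpc a ha
    refine Finset.mem_filter.2 ⟨Finset.mem_Icc.2 ⟨?_, ?_⟩, hσr a ha⟩
    · rw [Pi.le_def]
      intro i
      exact hclb a ha i
    · rw [Pi.le_def]
      intro i
      obtain ⟨b, hb, hbi⟩ := hcmin i
      have h1 := (hpc a ha b hb i).1
      change a i ≤ c i + 1
      omega
  have h4to3 : σ ⊆ aUF q r c →
      (∀ a ∈ σ, ∀ b ∈ σ, ∀ i, a i ≤ b i + 1 ∧ b i ≤ a i + 1) := by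
    intro hsub a ha b hb i
    have h1 := Finset.mem_Icc.1 (Finset.mem_filter.1 (hsub ha)).1
    have h2 := Finset.mem_Icc.1 (Finset.mem_filter.1 (hsub hb)).1
    have h3 : c i ≤ a i := h1.1 i
    have h4 : a i ≤ c i + 1 := h1.2 i
    have h5 : c i ≤ b i := h2.1 i
    have h6 : b i ≤ c i + 1 := h2.2 i
    exact ⟨by omega, by omega⟩
  refine ⟨⟨h1to2, fun h => h3to1 (h2to3 h)⟩,
    ⟨fun h => h2to3 (h1to2 h), h3to1⟩,
    ⟨fun h => h3to4 (h2to3 (h1to2 h)), fun h => h3to1 (h4to3 h)⟩⟩
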